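/- Let δ > 0 and let f: ℝ → ℂ be a continuous function with |f(x)| ≤ C₁/(1+x²) for all x ∈ ℝ and some constant C₁ > 0. Let K = {z ∈ ℂ : |z| ≤ 1} and equip K^ℤ with the product topology. Then the map Φ: K^ℤ → C(ℝ, ℂ) defined by Φ((a_n)_{n∈ℤ})(x) = Σ_{n∈ℤ} a_n f(x − δn) is well defined (the series converges uniformly on every compact subset of ℝ) and continuous, where C(ℝ, ℂ) carries the topology of uniform convergence on compact subsets of ℝ. -/
import Mathlib


open Set Filter

noncomputable section

open Asymptotics in
lemma aux_summable (δ C₁ R : ℝ) (hδ : 0 < δ) :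
    Summable (fun n : ℤ => C₁ / (1 + max 0 (δ * |(n : ℝ)| - R) ^ 2)) := by
  apply summable_of_isBigO (g := fun n : ℤ => 1 / (n : ℝ) ^ 2)
    ((Real.summable_one_div_int_pow (p := 2)).2 one_lt_two)
  rw [isBigO_iff]
  refine ⟨4 * |C₁| / δ ^ 2, ?_⟩
  rw [eventually_cofinite]
  have key : ∀ n : ℤ, 2 * |R| / δ + 1 ≤ |(n : ℝ)| →
      ‖C₁ / (1 + max 0 (δ * |(n : ℝ)| - R) ^ 2)‖ ≤ 4 * |C₁| / δ ^ 2 * ‖1 / (n : ℝ) ^ 2‖ := by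
    intro n hn
    set t : ℝ := |(n : ℝ)| with ht
    have hd : (0:ℝ) ≤ 2 * |R| / δ := by positivity
    have ht0 : 1 ≤ t := by linarith
    have h1 : 2 * |R| ≤ δ * t := by
      rw [div_add' _ _ _ hδ.ne', div_le_iff₀ hδ] at hn
      nlinarith [abs_nonneg R, hδ.le]
    have h2 : δ * t / 2 ≤ max 0 (δ * t - R) := by
      refine le_max_of_le_right ?_
      have : R ≤ |R| := le_abs_self R
      nlinarith
    have hm0 : (0:ℝ) ≤ max 0 (δ * t - R) := le_max_left _ _
    have hsq : (δ * t / 2) ^ 2 ≤ max 0 (δ * t - R) ^ 2 :=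
      pow_le_pow_left₀ (by positivity) h2 2
    have h3 : δ ^ 2 * t ^ 2 / 4 ≤ 1 + max 0 (δ * t - R) ^ 2 := by nlinarith
    have hnz : (0:ℝ) < t := by linarith
    rw [norm_div, norm_div, Real.norm_eq_abs, Real.norm_eq_abs, Real.norm_eq_abs,
      Real.norm_eq_abs, abs_one, abs_pow]
    have hne : |(1 : ℝ) + max 0 (δ * t - R) ^ 2| = 1 + max 0 (δ * t - R) ^ 2 := by
      rw [abs_of_pos]; positivity
    rw [hne, ← ht]
    rw [div_le_iff₀ (by positivity)]
    have heq : 4 * |C₁| / δ ^ 2 * (1 / t ^ 2) * (1 + max 0 (δ * t - R) ^ 2)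
        = |C₁| * ((1 + max 0 (δ * t - R) ^ 2) * 4 / (δ ^ 2 * t ^ 2)) := by ring
    rw [heq]
    have h4 : (1:ℝ) ≤ (1 + max 0 (δ * t - R) ^ 2) * 4 / (δ ^ 2 * t ^ 2) := by
      rw [le_div_iff₀ (by positivity)]
      nlinarith
    nlinarith [abs_nonneg C₁]
  apply Set.Finite.subset (Set.finite_Icc (-⌈2 * |R| / δ + 1⌉) ⌈2 * |R| / δ + 1⌉)
  intro n hn
  simp only [Set.mem_setOf_eq] at hn
  have h : |(n:ℝ)| < 2 * |R| / δ + 1 := by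
    by_contra h
    exact hn (key n (not_lt.1 h))
  have h2 : |n| ≤ ⌈2 * |R| / δ + 1⌉ := by
    rw [← @Int.cast_le ℝ]
    calc ((|n| : ℤ) : ℝ) = |(n:ℝ)| := Int.cast_abs
    _ ≤ 2 * |R| / δ + 1 := h.le
    _ ≤ _ := Int.le_ceil _
  exact Set.mem_Icc.2 (abs_le.1 h2)

lemma aux_bound (δ : ℝ) (hδ : 0 < δ) (f : ℝ → ℂ) (C₁ : ℝ) (hC₁ : 0 < C₁)
    (hdecay : ∀ x : ℝ, ‖f x‖ ≤ C₁ / (1 + x ^ 2)) (R : ℝ)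
    (z : ℂ) (hz : ‖z‖ ≤ 1) (x : ℝ) (hx : |x| ≤ R) (n : ℤ) :
    ‖z * f (x - δ * n)‖ ≤ C₁ / (1 + max 0 (δ * |(n : ℝ)| - R) ^ 2) := by
  have habs : δ * |(n:ℝ)| = |δ * (n:ℝ)| := by rw [abs_mul, abs_of_pos hδ]
  have h1 : max 0 (δ * |(n:ℝ)| - R) ≤ |x - δ * n| := by
    apply max_le (abs_nonneg _)
    calc δ * |(n:ℝ)| - R ≤ |δ * (n:ℝ)| - |x| := by rw [← habs]; linarith
      _ ≤ |x - δ * n| := by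
        have h := abs_sub_abs_le_abs_sub (δ * (n:ℝ)) x
        rw [abs_sub_comm] at h; linarith
  have h2 : max 0 (δ * |(n:ℝ)| - R) ^ 2 ≤ (x - δ * n) ^ 2 := by
    have := pow_le_pow_left₀ (le_max_left _ _) h1 2
    rwa [sq_abs] at this
  calc ‖z * f (x - δ * n)‖ = ‖z‖ * ‖f (x - δ * n)‖ := norm_mul _ _
    _ ≤ 1 * (C₁ / (1 + (x - δ * n) ^ 2)) :=
        mul_le_mul hz (hdecay _) (norm_nonneg _) zero_le_one
    _ = C₁ / (1 + (x - δ * n) ^ 2) := one_mul _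
    _ ≤ C₁ / (1 + max 0 (δ * |(n:ℝ)| - R) ^ 2) := by
        apply div_le_div_of_nonneg_left hC₁.le (by positivity) (by linarith)

/-- Let `f : ℝ → ℂ` be continuous with `|f(x)| ≤ C₁/(1+x²)` and let `K` be the closed unit
disc of `ℂ`. Then `Φ((a_n)_n)(x) = Σ_{n∈ℤ} a_n f(x - δn)` is well defined (the series
converges absolutely, uniformly on every compact subset of `ℝ`) and defines a continuous
map from `K^ℤ` (product topology) to `C(ℝ, ℂ)` (compact-open topology, i.e. the topology
of uniform convergence on compact subsets). -/
theorem interpolation_map_continuous (δ : ℝ) (hδ : 0 < δ)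
    (f : ℝ → ℂ) (hf : Continuous f)
    (C₁ : ℝ) (hC₁ : 0 < C₁) (hdecay : ∀ x : ℝ, ‖f x‖ ≤ C₁ / (1 + x ^ 2)) :
    (∀ a : ℤ → Metric.closedBall (0 : ℂ) 1, ∀ x : ℝ,
      Summable fun n : ℤ => ‖(a n : ℂ) * f (x - δ * n)‖) ∧
    (∀ a : ℤ → Metric.closedBall (0 : ℂ) 1, ∀ K : Set ℝ, IsCompact K →
      TendstoUniformlyOn (fun (s : Finset ℤ) (x : ℝ) => ∑ n ∈ s, (a n : ℂ) * f (x - δ * n))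
        (fun x => ∑' n : ℤ, (a n : ℂ) * f (x - δ * n)) atTop K) ∧
    (∃ Φ : (ℤ → Metric.closedBall (0 : ℂ) 1) → C(ℝ, ℂ),
      Continuous Φ ∧
      ∀ a x, Φ a x = ∑' n : ℤ, (a n : ℂ) * f (x - δ * n)) := by
  have hbound : ∀ (a : ℤ → Metric.closedBall (0:ℂ) 1) (R x : ℝ), |x| ≤ R → ∀ n : ℤ,
      ‖(a n : ℂ) * f (x - δ * n)‖ ≤ C₁ / (1 + max 0 (δ * |(n:ℝ)| - R) ^ 2) :=
    fun a R x hx n => aux_bound δ hδ f C₁ hC₁ hdecay R (a n)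
      (mem_closedBall_zero_iff.1 (a n).2) x hx n
  refine ⟨?_, ?_, ?_⟩
  · intro a x
    exact Summable.of_nonneg_of_le (fun n => norm_nonneg _)
      (fun n => hbound a |x| x le_rfl n) (aux_summable δ C₁ |x| hδ)
  · intro a K hK
    obtain ⟨R, hR⟩ := hK.isBounded.subset_closedBall 0
    refine tendstoUniformlyOn_tsum (aux_summable δ C₁ R hδ) (fun n x hx => ?_)
    have hx' : |x| ≤ R := by
      have := mem_closedBall_zero_iff.1 (hR hx); rwa [Real.norm_eq_abs] at this
    exact hbound a R x hx' n
  · have hcont : ∀ a : ℤ → Metric.closedBall (0:ℂ) 1,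
        Continuous (fun x : ℝ => ∑' n : ℤ, (a n : ℂ) * f (x - δ * n)) := by
      intro a
      rw [continuous_iff_continuousAt]
      intro x₀
      have hc : ContinuousOn (fun x => ∑' n : ℤ, (a n : ℂ) * f (x - δ * n))
          (Metric.closedBall x₀ 1) := by
        refine continuousOn_tsum (fun n => Continuous.continuousOn ?_)
          (aux_summable δ C₁ (|x₀| + 1) hδ) (fun n x hx => ?_)
        · exact continuous_const.mul (hf.comp (continuous_id.sub continuous_const))
        · refine hbound a (|x₀| + 1) x ?_ n
          have h1 : |x - x₀| ≤ 1 := by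
            have := Metric.mem_closedBall.1 hx; rwa [Real.dist_eq] at this
          calc |x| = |x - x₀ + x₀| := by ring_nf
            _ ≤ |x - x₀| + |x₀| := abs_add_le _ _
            _ ≤ |x₀| + 1 := by linarith
      exact hc.continuousAt (Metric.closedBall_mem_nhds x₀ one_pos)
    refine ⟨fun a => ⟨fun x => ∑' n : ℤ, (a n : ℂ) * f (x - δ * n), hcont a⟩,
      ?_, fun a x => rfl⟩
    apply ContinuousMap.continuous_of_continuous_uncurry
    rw [continuous_iff_continuousAt]
    rintro ⟨a₀, x₀⟩
    have hs : (Set.univ ×ˢ Metric.closedBall x₀ 1) ∈ nhds (a₀, x₀) :=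
      prod_mem_nhds Filter.univ_mem (Metric.closedBall_mem_nhds x₀ one_pos)
    have hc : ContinuousOn
        (fun p : (ℤ → Metric.closedBall (0:ℂ) 1) × ℝ =>
          ∑' n : ℤ, (p.1 n : ℂ) * f (p.2 - δ * n))
        (Set.univ ×ˢ Metric.closedBall x₀ 1) := by
      refine continuousOn_tsum (fun n => Continuous.continuousOn ?_)
        (aux_summable δ C₁ (|x₀| + 1) hδ) ?_
      · exact (continuous_subtype_val.comp ((continuous_apply n).comp continuous_fst)).mul
          (hf.comp (continuous_snd.sub continuous_const))
      · rintro n ⟨a, x⟩ hp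
        have hx : x ∈ Metric.closedBall x₀ 1 := hp.2
        refine hbound a (|x₀| + 1) x ?_ n
        have h1 : |x - x₀| ≤ 1 := by
          have := Metric.mem_closedBall.1 hx; rwa [Real.dist_eq] at this
        calc |x| = |x - x₀ + x₀| := by ring_nf
          _ ≤ |x - x₀| + |x₀| := abs_add_le _ _
          _ ≤ |x₀| + 1 := by linarith
    exact hc.continuousAt hs

end
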